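/- Let P(ζ) be a monic real polynomial of degree m with all roots real, and s > 0. Then all roots of (1 + s d/dζ) P(ζ) are real, they interlace the roots of P, and the smallest root of (1 + s d/dζ)P is ≤ (smallest root of P) − s. -/

import Mathlib

open Polynomial Finset Real Filter

lemma pow_dvd_deriv (x : ℝ) (n : ℕ) (p : ℝ[X]) (h : (X - C x) ^ (n + 1) ∣ p) :
    (X - C x) ^ n ∣ derivative p := by
  obtain ⟨b, rfl⟩ := h
  rw [derivative_mul, derivative_pow, derivative_X_sub_C, Nat.add_sub_cancel, mul_one]
  exact dvd_add (((dvd_refl _).mul_left _).mul_right _)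
    (((pow_dvd_pow _ (Nat.le_succ n)).mul_right _))

lemma derivative_finset_prod {ι : Type*} [DecidableEq ι] (s : Finset ι) (f : ι → ℝ[X]) :
    derivative (∏ i ∈ s, f i) = ∑ i ∈ s, (∏ j ∈ s.erase i, f j) * derivative (f i) := by
  classical
  induction s using Finset.induction_on with
  | empty => simp
  | insert _ _ hx ih =>
    rename_i a t
    rw [Finset.prod_insert hx, derivative_mul, Finset.sum_insert hx, Finset.erase_insert hx,
      ih, Finset.mul_sum]
    congr 1
    · exact mul_comm _ _
    · refine Finset.sum_congr rfl fun i hi => ?_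
      rw [Finset.erase_insert_of_ne (by rintro rfl; exact hx hi),
        Finset.prod_insert (fun h => hx (Finset.mem_of_mem_erase h))]
      ring

lemma exp_deriv_aux (s : ℝ) (hs : s ≠ 0) (P : ℝ[X]) (x : ℝ) :
    HasDerivAt (fun x => Real.exp (x / s) * eval x P)
      (Real.exp (x / s) * s⁻¹ * eval x (P + s • derivative P)) x := by
  have h1 : HasDerivAt (fun x : ℝ => x / s) (1 / s) x := (hasDerivAt_id x).div_const s
  have h2 := (h1.exp).mul (P.hasDerivAt x)
  refine h2.congr_deriv ?_
  rw [eval_add, eval_smul, smul_eq_mul]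
  field_simp

lemma tendsto_aux (s : ℝ) (hs : 0 < s) (P : ℝ[X]) :
    Tendsto (fun x => Real.exp (x / s) * eval x P) atBot (nhds 0) := by
  have key : ∀ x : ℝ, Real.exp (x / s) * eval x P
      = eval (-(x / s)) (P.comp (C (-s) * X)) / Real.exp (-(x / s)) := by
    intro x
    rw [eval_comp, eval_mul, eval_C, eval_X, Real.exp_neg]
    rw [show -s * -(x / s) = x by field_simp]
    field_simp
  simp_rw [key]
  have h1 : Tendsto (fun y : ℝ => eval y (P.comp (C (-s) * X)) / Real.exp y) atTop (nhds 0) :=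
    Polynomial.tendsto_div_exp_atTop _
  have h2 : Tendsto (fun x : ℝ => -(x / s)) atBot atTop := by
    apply Filter.tendsto_neg_atBot_atTop.comp
    exact Filter.Tendsto.atBot_div_const hs tendsto_id
  exact h1.comp h2

lemma bound_aux (m : ℕ) (s : ℝ) (hs : 0 < s) (μ : Fin (m + 1) → ℝ) (hμ : Monotone μ)
    (c : ℝ) (hc : c < μ 0)
    (h0 : eval c ((∏ i, (X - C (μ i))) + s • derivative (∏ i, (X - C (μ i)))) = 0) :
    c ≤ μ 0 - s := by
  have key : ∀ i, c - μ i < 0 := fun i => sub_neg.mpr (lt_of_lt_of_le hc (hμ (Fin.zero_le i)))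
  have hAe : eval c (∏ i, (X - C (μ i))) = ∏ i, (c - μ i) := by simp [eval_prod]
  have hAne : (∏ i, (c - μ i)) ≠ 0 := prod_ne_zero_iff.mpr fun i _ => (key i).ne
  have herase : ∀ i : Fin (m + 1),
      (∏ j ∈ univ.erase i, (c - μ j)) = (∏ j, (c - μ j)) * (c - μ i)⁻¹ := by
    intro i
    rw [← Finset.prod_erase_mul univ _ (mem_univ i), mul_inv_cancel_right₀ (key i).ne]
  have hD : eval c (derivative (∏ i, (X - C (μ i)))) =
      ∑ i, (∏ j, (c - μ j)) * (c - μ i)⁻¹ := by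
    rw [derivative_finset_prod, eval_finset_sum]
    refine Finset.sum_congr rfl fun i _ => ?_
    rw [← herase i]
    simp [eval_prod]
  rw [eval_add, eval_smul, smul_eq_mul, hAe, hD] at h0
  have h2 : (∏ j, (c - μ j)) * (1 + s * ∑ i, (c - μ i)⁻¹) = 0 := by
    rw [mul_add, mul_one, mul_left_comm, Finset.mul_sum]
    exact h0
  have hsum : 1 + s * ∑ i, (c - μ i)⁻¹ = 0 := (mul_eq_zero.mp h2).resolve_left hAne
  have hterm : ∀ i, (c - μ i)⁻¹ < 0 := fun i => inv_lt_zero.mpr (key i)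
  have hle : (∑ i, (c - μ i)⁻¹) ≤ (c - μ 0)⁻¹ := by
    rw [← Finset.add_sum_erase _ _ (mem_univ 0)]
    have : (∑ i ∈ univ.erase 0, (c - μ i)⁻¹) ≤ 0 :=
      Finset.sum_nonpos fun i _ => (hterm i).le
    linarith
  have h6 : -1 ≤ s * (c - μ 0)⁻¹ := by
    nlinarith [mul_le_mul_of_nonneg_left hle hs.le]
  nlinarith [mul_inv_cancel₀ (key 0).ne, key 0,
    mul_nonneg (by linarith : (0:ℝ) ≤ s * (c - μ 0)⁻¹ + 1)
      (by linarith [key 0] : (0:ℝ) ≤ -(c - μ 0)), hs]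

lemma low_aux (m : ℕ) (s : ℝ) (hs : 0 < s) (μ : Fin (m + 1) → ℝ) (hμ : Monotone μ) :
    ∃ c, c < μ 0 ∧
      eval c ((∏ i, (X - C (μ i))) + s • derivative (∏ i, (X - C (μ i)))) = 0 := by
  set P : ℝ[X] := ∏ i, (X - C (μ i)) with hP
  set Q : ℝ[X] := P + s • derivative P with hQ
  set f : ℝ → ℝ := fun x => Real.exp (x / s) * eval x P with hf
  have hfd : ∀ x, HasDerivAt f (Real.exp (x / s) * s⁻¹ * eval x Q) x :=
    fun x => exp_deriv_aux s hs.ne' P x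
  have hfc : Continuous f := by
    refine continuous_iff_continuousAt.mpr fun x => (hfd x).continuousAt
  have hroot : ∀ c, deriv f c = 0 → eval c Q = 0 := by
    intro c h
    have := (hfd c).deriv
    rw [this] at h
    have he : Real.exp (c / s) * s⁻¹ ≠ 0 :=
      mul_ne_zero (Real.exp_ne_zero _) (inv_ne_zero hs.ne')
    exact (mul_eq_zero.mp h).resolve_left he
  have hPne : ∀ x, x < μ 0 → eval x P ≠ 0 := by
    intro x hx
    rw [hP]
    simp only [eval_prod, eval_sub, eval_X, eval_C]
    exact prod_ne_zero_iff.mpr fun i _ =>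
      sub_ne_zero.mpr (ne_of_lt (lt_of_lt_of_le hx (hμ (Fin.zero_le i))))
  have hfne : ∀ x, x < μ 0 → f x ≠ 0 := fun x hx =>
    mul_ne_zero (Real.exp_ne_zero _) (hPne x hx)
  have hfb : f (μ 0) = 0 := by
    have h1 : eval (μ 0) P = 0 := by
      rw [hP]
      rw [eval_prod]
      exact Finset.prod_eq_zero (mem_univ 0) (by simp)
    simp [hf, h1]
  set x₀ : ℝ := μ 0 - 1 with hx₀
  have hx₀lt : x₀ < μ 0 := by rw [hx₀]; linarith
  have hfx₀ : f x₀ ≠ 0 := hfne x₀ hx₀lt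
  have htend := tendsto_aux s hs P
  have hev : ∀ᶠ x in atBot, |f x| < |f x₀| ∧ x < x₀ := by
    refine Filter.Eventually.and ?_ (Filter.eventually_lt_atBot x₀)
    have := htend.eventually (eventually_abs_sub_lt 0 (abs_pos.mpr hfx₀))
    simpa [hf, abs_mul, Real.abs_exp] using this
  obtain ⟨A, hA1, hA2⟩ := hev.exists
  rcases hfx₀.lt_or_gt with hneg | hpos
  · obtain ⟨c, hc1, hc2⟩ := (isCompact_Icc (a := A) (b := μ 0)).exists_isMinOn
      (Set.nonempty_Icc.mpr (by linarith)) hfc.continuousOn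
    have hcx₀ : f c ≤ f x₀ := hc2 (Set.mem_Icc.mpr ⟨hA2.le, by linarith⟩)
    have hcA : A < c := by
      rcases eq_or_lt_of_le hc1.1 with h | h
      · exfalso
        rw [← h] at hcx₀
        have : |f A| < -(f x₀) := by rwa [abs_of_neg hneg] at hA1
        have := neg_abs_le (f A)
        linarith
      · exact h
    have hcb : c < μ 0 := by
      rcases eq_or_lt_of_le hc1.2 with h | h
      · exfalso; rw [h, hfb] at hcx₀; linarith
      · exact h
    refine ⟨c, hcb, hroot c ?_⟩
    exact (hc2.isLocalMin (Icc_mem_nhds hcA hcb)).deriv_eq_zero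
  · obtain ⟨c, hc1, hc2⟩ := (isCompact_Icc (a := A) (b := μ 0)).exists_isMaxOn
      (Set.nonempty_Icc.mpr (by linarith)) hfc.continuousOn
    have hcx₀ : f x₀ ≤ f c := hc2 (Set.mem_Icc.mpr ⟨hA2.le, by linarith⟩)
    have hcA : A < c := by
      rcases eq_or_lt_of_le hc1.1 with h | h
      · exfalso
        rw [← h] at hcx₀
        have : |f A| < f x₀ := by rwa [abs_of_pos hpos] at hA1
        have := le_abs_self (f A)
        linarith
      · exact h
    have hcb : c < μ 0 := by
      rcases eq_or_lt_of_le hc1.2 with h | h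
      · exfalso; rw [h, hfb] at hcx₀; linarith
      · exact h
    refine ⟨c, hcb, hroot c ?_⟩
    exact (hc2.isLocalMax (Icc_mem_nhds hcA hcb)).deriv_eq_zero

theorem stmt4 (m : ℕ) (hm : 0 < m) (s : ℝ) (hs : 0 < s)
    (μ : Fin m → ℝ) (hμ : Monotone μ) :
    ∃ ν : Fin m → ℝ, Monotone ν ∧
      (∏ i, (X - C (μ i))) + s • derivative (∏ i, (X - C (μ i))) =
        ∏ i, (X - C (ν i)) ∧
      (∀ i, ν i ≤ μ i) ∧
      (∀ i j : Fin m, (i : ℕ) + 1 = (j : ℕ) → μ i ≤ ν j) ∧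
      ν ⟨0, hm⟩ ≤ μ ⟨0, hm⟩ - s := by
  classical
  obtain ⟨n, rfl⟩ : ∃ n, m = n + 1 := ⟨m - 1, by omega⟩
  set P : ℝ[X] := ∏ i, (X - C (μ i)) with hP
  set Q : ℝ[X] := P + s • derivative P with hQdef
  have hPm : P.Monic := monic_prod_of_monic _ _ fun i _ => monic_X_sub_C _
  have hPdeg : P.natDegree = n + 1 := by
    rw [hP, natDegree_prod_of_monic _ _ fun i _ => monic_X_sub_C _]
    simp [natDegree_X_sub_C]
  have hd : (s • derivative P).degree < P.degree :=
    lt_of_le_of_lt (degree_smul_le _ _) (degree_derivative_lt hPm.ne_zero)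
  have hQm : Q.Monic := hPm.add_of_left hd
  have hQ0 : Q ≠ 0 := hQm.ne_zero
  have hQdeg : Q.natDegree = n + 1 :=
    (natDegree_eq_of_degree_eq (degree_add_eq_left_of_degree_lt hd)).trans hPdeg
  obtain ⟨c₀, hc₀lt, hc₀r⟩ := low_aux n s hs μ hμ
  have hb0 : c₀ ≤ μ 0 - s := bound_aux n s hs μ hμ c₀ hc₀lt hc₀r
  rw [← hP, ← hQdef] at hc₀r
  -- Rolle roots in the gaps
  have hgap : ∀ i : Fin n, μ i.castSucc < μ i.succ →
      ∃ c, (μ i.castSucc < c ∧ c < μ i.succ) ∧ eval c Q = 0 := by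
    intro i hlt
    set f : ℝ → ℝ := fun x => Real.exp (x / s) * eval x P with hf
    have hfd : ∀ x, HasDerivAt f (Real.exp (x / s) * s⁻¹ * eval x Q) x := by
      intro x
      have := exp_deriv_aux s hs.ne' P x
      rw [← hQdef] at this
      exact this
    have hfc : Continuous f := continuous_iff_continuousAt.mpr fun x => (hfd x).continuousAt
    have hroots : ∀ j : Fin (n + 1), f (μ j) = 0 := by
      intro j
      have h1 : eval (μ j) P = 0 := by
        rw [hP, eval_prod]
        exact Finset.prod_eq_zero (mem_univ j) (by simp)
      simp [hf, h1]
    obtain ⟨c, hc, hd0⟩ := exists_deriv_eq_zero hlt hfc.continuousOn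
      ((hroots _).trans (hroots _).symm)
    refine ⟨c, ⟨hc.1, hc.2⟩, ?_⟩
    rw [(hfd c).deriv] at hd0
    exact (mul_eq_zero.mp hd0).resolve_left
      (mul_ne_zero (Real.exp_ne_zero _) (inv_ne_zero hs.ne'))
  -- define ν
  set ν : Fin (n + 1) → ℝ := Fin.cases c₀
    (fun i => if h : μ i.castSucc < μ i.succ then (hgap i h).choose else μ i.succ) with hν
  have hν0 : ν 0 = c₀ := by simp [hν]
  have key : ∀ i : Fin n,
      (μ i.castSucc ≤ ν i.succ ∧ ν i.succ ≤ μ i.succ) ∧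
      ((μ i.castSucc = μ i.succ ∧ ν i.succ = μ i.succ) ∨
        (μ i.castSucc < ν i.succ ∧ ν i.succ < μ i.succ ∧ eval (ν i.succ) Q = 0)) := by
    intro i
    have hνs : ν i.succ = if h : μ i.castSucc < μ i.succ then (hgap i h).choose
        else μ i.succ := by simp [hν]
    rw [hνs]
    split_ifs with h
    · obtain ⟨⟨h1, h2⟩, h3⟩ := (hgap i h).choose_spec
      exact ⟨⟨h1.le, h2.le⟩, Or.inr ⟨h1, h2, h3⟩⟩
    · have he : μ i.castSucc = μ i.succ :=
        le_antisymm (hμ (Fin.castSucc_le_succ i)) (not_lt.mp h)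
      exact ⟨⟨he.le, le_refl _⟩, Or.inl ⟨he, rfl⟩⟩
  have hA : ∀ i, ν i ≤ μ i := by
    intro i
    rcases Fin.eq_zero_or_eq_succ i with rfl | ⟨i', rfl⟩
    · rw [hν0]; exact hc₀lt.le
    · exact (key i').1.2
  have hB : ∀ i : Fin n, μ i.castSucc ≤ ν i.succ := fun i => (key i).1.1
  have hν0' : ν 0 < μ 0 := by rw [hν0]; exact hc₀lt
  have hν0root : eval (ν 0) Q = 0 := by rw [hν0]; exact hc₀r
  have hgapfacts : ∀ i : Fin n, ν i.succ < μ i.succ →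
      μ i.castSucc < ν i.succ ∧ ν i.succ < μ i.succ ∧ eval (ν i.succ) Q = 0 := by
    intro i hlt
    rcases (key i).2 with ⟨_, he⟩ | hg
    · rw [he] at hlt; exact absurd hlt (lt_irrefl _)
    · exact hg
  have hsep : ∀ i, ν i < μ i → ∀ j, ν i ≠ μ j := by
    intro i
    rcases Fin.eq_zero_or_eq_succ i with rfl | ⟨i', rfl⟩
    · intro _ j
      exact ne_of_lt (lt_of_lt_of_le hν0' (hμ (Fin.zero_le j)))
    · intro hlt j
      obtain ⟨h1, h2, _⟩ := hgapfacts i' hlt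
      rcases le_or_gt ((j : ℕ)) ((i' : ℕ)) with hj | hj
      · exact ne_of_gt (lt_of_le_of_lt
          (hμ (show j ≤ i'.castSucc by rw [Fin.le_def]; simpa using hj)) h1)
      · exact ne_of_lt (lt_of_lt_of_le h2
          (hμ (show i'.succ ≤ j by rw [Fin.le_def]; simpa using hj)))
  have hroot_of_lt : ∀ i, ν i < μ i → eval (ν i) Q = 0 := by
    intro i
    rcases Fin.eq_zero_or_eq_succ i with rfl | ⟨i', rfl⟩
    · exact fun _ => hν0root
    · exact fun h => (hgapfacts i' h).2.2
  have hinj : ∀ i, ν i < μ i → ∀ j, j ≠ i → ν j ≠ ν i := by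
    intro i
    rcases Fin.eq_zero_or_eq_succ i with rfl | ⟨i', rfl⟩
    · intro hlt j hne
      rcases Fin.eq_zero_or_eq_succ j with rfl | ⟨j', rfl⟩
      · exact absurd rfl hne
      · exact ne_of_gt (lt_of_lt_of_le
          (lt_of_lt_of_le hν0' (hμ (Fin.zero_le j'.castSucc))) (hB j'))
    · intro hlt j hne
      obtain ⟨h1, h2, _⟩ := hgapfacts i' hlt
      rcases Fin.eq_zero_or_eq_succ j with rfl | ⟨j', rfl⟩
      · exact ne_of_lt (lt_of_lt_of_le hν0'
          (le_trans (hμ (Fin.zero_le i'.castSucc)) h1.le))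
      · have hji : (j' : ℕ) ≠ (i' : ℕ) := by
          intro h
          exact hne (by apply Fin.ext; simp [Fin.val_succ, h])
        rcases (key j').2 with ⟨_, he⟩ | ⟨g1, g2, _⟩
        · rw [he]
          exact (hsep i'.succ hlt j'.succ).symm
        · rcases lt_or_gt_of_ne hji with h | h
          · exact ne_of_lt (lt_of_le_of_lt (le_trans (key j').1.2
              (hμ (show j'.succ ≤ i'.castSucc by
                rw [Fin.le_def]; simp [Fin.val_succ]; omega))) h1)
          · exact ne_of_gt (lt_of_le_of_lt (le_trans (key i').1.2
              (hμ (show i'.succ ≤ j'.castSucc by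
                rw [Fin.le_def]; simp [Fin.val_succ]; omega))) g1)
  -- the multiplicity bound
  have hcount : ∀ x : ℝ, (univ.filter (fun i => ν i = x)).card ≤ rootMultiplicity x Q := by
    intro x
    rcases Finset.eq_empty_or_nonempty (univ.filter (fun i => ν i = x)) with he | ⟨i, hi⟩
    · simp [he]
    have hix : ν i = x := (Finset.mem_filter.mp hi).2
    by_cases hlt : ν i < μ i
    · have hsingle : univ.filter (fun j => ν j = x) = {i} := by
        apply Finset.eq_singleton_iff_unique_mem.mpr
        refine ⟨hi, fun j hj => ?_⟩
        by_contra hne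
        exact hinj i hlt j hne (((Finset.mem_filter.mp hj).2).trans hix.symm)
      rw [hsingle, Finset.card_singleton]
      exact (rootMultiplicity_pos hQ0).mpr
        (show Q.IsRoot x by rw [IsRoot, ← hix]; exact hroot_of_lt i hlt)
    · have hieq : ν i = μ i := le_antisymm (hA i) (not_lt.mp hlt)
      set T := univ.filter (fun j => μ j = x) with hT
      have hiT : i ∈ T := Finset.mem_filter.mpr ⟨Finset.mem_univ _, by rw [← hieq, hix]⟩
      have hTne : T.Nonempty := ⟨i, hiT⟩
      have hsub : univ.filter (fun j => ν j = x) ⊆ T.erase (T.min' hTne) := by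
        intro j hj
        have hjx : ν j = x := (Finset.mem_filter.mp hj).2
        have hjeq : ν j = μ j := by
          by_contra hne
          exact hsep j (lt_of_le_of_ne (hA j) hne) i (by rw [hjx, ← hix, hieq])
        have hjT : j ∈ T := Finset.mem_filter.mpr ⟨Finset.mem_univ _, by rw [← hjeq, hjx]⟩
        refine Finset.mem_erase.mpr ⟨?_, hjT⟩
        intro hjmin
        rcases Fin.eq_zero_or_eq_succ j with rfl | ⟨j', rfl⟩
        · exact absurd hjeq (ne_of_lt hν0')
        · rcases (key j').2 with ⟨hmeq, _⟩ | ⟨_, hg2, _⟩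
          · have hcT : j'.castSucc ∈ T := Finset.mem_filter.mpr
              ⟨Finset.mem_univ _, by rw [hmeq]; exact (Finset.mem_filter.mp hjT).2⟩
            have hmin := Finset.min'_le T _ hcT
            rw [← hjmin, Fin.le_def] at hmin
            simp only [Fin.val_succ, Fin.coe_castSucc] at hmin
            omega
          · exact absurd hjeq (ne_of_lt hg2)
      have hcard : (univ.filter (fun j => ν j = x)).card ≤ T.card - 1 := by
        have h := Finset.card_le_card hsub
        rwa [Finset.card_erase_of_mem (Finset.min'_mem T hTne)] at h
      have hTpos : 1 ≤ T.card := Finset.card_pos.mpr hTne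
      have hdvdP : (X - C x) ^ T.card ∣ P := by
        have hTprod : (∏ j ∈ T, (X - C (μ j))) = (X - C x) ^ T.card := by
          rw [show (∏ j ∈ T, (X - C (μ j))) = ∏ _j ∈ T, (X - C x) from
            Finset.prod_congr rfl fun j hj => by rw [(Finset.mem_filter.mp hj).2],
            Finset.prod_const]
        rw [hP, ← Finset.prod_filter_mul_prod_filter_not univ (fun j => μ j = x), ← hT, hTprod]
        exact dvd_mul_right _ _
      have hdvdQ : (X - C x) ^ (T.card - 1) ∣ Q := by
        have h1 : (X - C x) ^ (T.card - 1) ∣ P :=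
          dvd_trans (pow_dvd_pow _ (by omega)) hdvdP
        have h2 : (X - C x) ^ (T.card - 1) ∣ derivative P :=
          pow_dvd_deriv x _ P (by rw [show T.card - 1 + 1 = T.card by omega]; exact hdvdP)
        rw [hQdef]
        exact dvd_add h1 (by rw [Polynomial.smul_eq_C_mul]; exact h2.mul_left _)
      exact le_trans hcard ((le_rootMultiplicity_iff hQ0).mpr hdvdQ)
  -- assemble the multiset inequality
  have hle : Multiset.map ν univ.val ≤ Q.roots := by
    rw [Multiset.le_iff_count]
    intro x
    rw [count_roots]
    have hcnt : (Multiset.map ν univ.val).count x = (univ.filter (fun i => ν i = x)).card := by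
      rw [Multiset.count_map]
      rw [show (univ.filter (fun i => ν i = x)).card
          = Multiset.card (Multiset.filter (fun i => ν i = x) univ.val) from rfl]
      congr 1
      apply Multiset.filter_congr
      intro a _
      exact eq_comm
    rw [hcnt]
    exact hcount x
  have hRdvd : (∏ i, (X - C (ν i))) ∣ Q := by
    have h2 : (∏ i : Fin (n + 1), (X - C (ν i)))
        = ((Multiset.map ν univ.val).map (fun a => X - C a)).prod := by
      rw [Multiset.map_map]
      rfl
    rw [h2]
    exact dvd_trans (Multiset.prod_dvd_prod_of_le (Multiset.map_le_map hle))
      (prod_multiset_X_sub_C_dvd Q)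
  have hRm : (∏ i : Fin (n + 1), (X - C (ν i))).Monic :=
    monic_prod_of_monic _ _ fun i _ => monic_X_sub_C _
  have hRdeg : (∏ i : Fin (n + 1), (X - C (ν i))).natDegree = n + 1 := by
    rw [natDegree_prod_of_monic _ _ fun i _ => monic_X_sub_C _]
    simp [natDegree_X_sub_C]
  have hQR : Q = ∏ i, (X - C (ν i)) := by
    obtain ⟨u, hu⟩ := hRdvd
    have hu0 : u ≠ 0 := by rintro rfl; rw [mul_zero] at hu; exact hQ0 hu
    have hudeg : u.natDegree = 0 := by
      have h := natDegree_mul hRm.ne_zero hu0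
      rw [← hu, hQdeg, hRdeg] at h
      omega
    have hum : u.Monic := by
      have h := leadingCoeff_mul (∏ i : Fin (n + 1), (X - C (ν i))) u
      rw [← hu, hQm.leadingCoeff, hRm.leadingCoeff, one_mul] at h
      exact h.symm
    rw [hu, (hum.natDegree_eq_zero).mp hudeg, mul_one]
  have hmono : Monotone ν := by
    intro a b hab
    rcases eq_or_lt_of_le hab with rfl | hlt
    · exact le_refl _
    rcases Fin.eq_zero_or_eq_succ b with rfl | ⟨b', rfl⟩
    · exact absurd hlt (Fin.not_lt_zero a)
    · have h1 : a ≤ b'.castSucc := by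
        rw [Fin.le_def]
        rw [Fin.lt_def] at hlt
        simp [Fin.val_succ] at hlt ⊢
        omega
      exact le_trans (hA a) (le_trans (hμ h1) (hB b'))
  refine ⟨ν, hmono, hQR, hA, ?_, ?_⟩
  · intro i j hij
    have hi : (i : ℕ) < n := by have := j.isLt; omega
    have h1 : (⟨(i : ℕ), hi⟩ : Fin n).castSucc = i := by apply Fin.ext; simp
    have h2 : (⟨(i : ℕ), hi⟩ : Fin n).succ = j := by
      apply Fin.ext; simp [Fin.val_succ]; omega
    rw [← h1, ← h2]
    exact hB _
  · have h0 : (⟨0, hm⟩ : Fin (n + 1)) = 0 := rfl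
    rw [h0, hν0]
    exact hb0
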